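/- In the setting of the factorization C = S R_U D R_Vᵀ Tᵀ (A = SΣTᵀ of rank ρ, ‖A‖ = 1, C = A + UVᵀ, D = diag(σ_1,…,σ_ρ,1,…,1)), suppose the r×r blocks U_r and V_r are invertible. Then C is invertible and σ_ρ(A)/σ_n(C) ≤ ‖R_U⁻¹‖·‖R_V⁻¹‖ ≤ (1+‖U‖)(1+‖V‖)·max{1,‖U_r⁻¹‖}·max{1,‖V_r⁻¹‖}, where σ_n(C) = 1/‖C⁻¹‖. -/

import Mathlib

open Matrix
open scoped Matrix.Norms.L2Operator

private lemma l2norm_le_bound {m n : Type*} [Fintype m] [Fintype n] [DecidableEq n]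
    (A : Matrix m n ℝ) {c : ℝ} (hc : 0 ≤ c)
    (h : ∀ x : EuclideanSpace ℝ n, ‖(EuclideanSpace.equiv m ℝ).symm (A *ᵥ x)‖ ≤ c * ‖x‖) :
    ‖A‖ ≤ c := by
  rw [Matrix.l2_opNorm_def]
  exact ContinuousLinearMap.opNorm_le_bound _ hc fun x => h x

private lemma euclid_norm_sq {n : Type*} [Fintype n] (x : EuclideanSpace ℝ n) :
    ‖x‖ ^ 2 = ∑ i, x i ^ 2 := by
  rw [EuclideanSpace.norm_eq, Real.sq_sqrt (by positivity)]
  simp [sq_abs]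

private lemma sq_le_sq_imp {a b : ℝ} (ha : 0 ≤ a) (hb : 0 ≤ b) (h : a ^ 2 ≤ b ^ 2) : a ≤ b := by
  nlinarith

private lemma l2norm_diagonal_le {n : Type*} [Fintype n] [DecidableEq n]
    (v : n → ℝ) {c : ℝ} (hc : 0 ≤ c) (h : ∀ i, |v i| ≤ c) :
    ‖Matrix.diagonal v‖ ≤ c := by
  apply l2norm_le_bound _ hc
  intro x
  apply sq_le_sq_imp (norm_nonneg _) (by positivity)
  rw [euclid_norm_sq, mul_pow, euclid_norm_sq, Finset.mul_sum]
  apply Finset.sum_le_sum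
  intro i _
  have hx : ((EuclideanSpace.equiv n ℝ).symm (Matrix.diagonal v *ᵥ x)) i = v i * x i := by
    simp [Matrix.mulVec, diagonal_dotProduct]
  rw [hx, mul_pow]
  have := h i
  nlinarith [sq_nonneg (x i), pow_le_pow_left₀ (abs_nonneg (v i)) (h i) 2, sq_abs (v i)]

private lemma le_l2norm_diagonal {n : Type*} [Fintype n] [DecidableEq n] (v : n → ℝ) (i : n) :
    |v i| ≤ ‖Matrix.diagonal v‖ := by
  have h := Matrix.l2_opNorm_mulVec (Matrix.diagonal v)
    ((EuclideanSpace.equiv n ℝ).symm (Pi.single i 1))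
  have h1 : (Matrix.diagonal v *ᵥ ((EuclideanSpace.equiv n ℝ).symm (Pi.single i 1) : n → ℝ))
      = Pi.single i (v i) := by
    funext j
    simp only [Matrix.mulVec, diagonal_dotProduct]
    rcases eq_or_ne j i with rfl | hj
    · simp
    · simp [Pi.single_eq_of_ne hj, hj]
  rw [h1] at h
  have h2 : ∀ a : ℝ, ‖(EuclideanSpace.equiv n ℝ).symm (Pi.single i a : n → ℝ)‖ = |a| := by
    intro a
    have : (EuclideanSpace.equiv n ℝ).symm (Pi.single i a : n → ℝ) = EuclideanSpace.single i a := rfl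
    rw [this, EuclideanSpace.norm_single]
    exact Real.norm_eq_abs a
  rw [h2] at h
  calc |v i| ≤ ‖diagonal v‖ * ‖(EuclideanSpace.equiv n ℝ).symm (Pi.single i 1)‖ := h
    _ = ‖diagonal v‖ := by rw [h2]; simp

private lemma l2norm_one_le {n : Type*} [Fintype n] [DecidableEq n] :
    ‖(1 : Matrix n n ℝ)‖ ≤ 1 := by
  rw [← Matrix.diagonal_one]
  exact l2norm_diagonal_le _ zero_le_one (fun i => by simp)

private lemma l2norm_le_one_of_mul {m n : Type*} [Fintype m] [Fintype n] [DecidableEq n]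
    [DecidableEq m] (M : Matrix m n ℝ) (h : Mᵀ * M = 1) : ‖M‖ ≤ 1 := by
  have h1 : ‖Mᴴ * M‖ = ‖M‖ * ‖M‖ := Matrix.l2_opNorm_conjTranspose_mul_self M
  rw [Matrix.conjTranspose_eq_transpose_of_trivial, h] at h1
  have h2 : ‖(1 : Matrix n n ℝ)‖ ≤ 1 := l2norm_one_le
  nlinarith [norm_nonneg M]

private lemma l2norm_transpose {m n : Type*} [Fintype m] [Fintype n] [DecidableEq m] [DecidableEq n]
    (M : Matrix m n ℝ) : ‖Mᵀ‖ = ‖M‖ := by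
  rw [← Matrix.conjTranspose_eq_transpose_of_trivial]
  exact Matrix.l2_opNorm_conjTranspose M

private lemma l2norm_fromBlocks_diag_le {p q : Type*} [Fintype p] [Fintype q]
    [DecidableEq p] [DecidableEq q]
    (X : Matrix p p ℝ) (Y : Matrix q q ℝ) {c : ℝ} (hc : 0 ≤ c) (hX : ‖X‖ ≤ c) (hY : ‖Y‖ ≤ c) :
    ‖Matrix.fromBlocks X 0 0 Y‖ ≤ c := by
  apply l2norm_le_bound _ hc
  intro x
  apply sq_le_sq_imp (norm_nonneg _) (by positivity)
  set x₁ : EuclideanSpace ℝ p := (EuclideanSpace.equiv p ℝ).symm (fun i => x (Sum.inl i))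
  set x₂ : EuclideanSpace ℝ q := (EuclideanSpace.equiv q ℝ).symm (fun i => x (Sum.inr i))
  have hxs : (x : (p ⊕ q) → ℝ) = Sum.elim (x₁ : p → ℝ) (x₂ : q → ℝ) := by
    funext i; cases i <;> rfl
  have hmv : (Matrix.fromBlocks X 0 0 Y *ᵥ (x : (p ⊕ q) → ℝ))
      = Sum.elim (X *ᵥ (x₁ : p → ℝ)) (Y *ᵥ (x₂ : q → ℝ)) := by
    rw [hxs, Matrix.fromBlocks_mulVec]
    simp
  have hsplit : ‖(EuclideanSpace.equiv (p ⊕ q) ℝ).symm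
      (Matrix.fromBlocks X 0 0 Y *ᵥ (x : (p ⊕ q) → ℝ))‖ ^ 2
      = ‖(EuclideanSpace.equiv p ℝ).symm (X *ᵥ (x₁ : p → ℝ))‖ ^ 2
        + ‖(EuclideanSpace.equiv q ℝ).symm (Y *ᵥ (x₂ : q → ℝ))‖ ^ 2 := by
    rw [euclid_norm_sq, euclid_norm_sq, euclid_norm_sq, hmv, Fintype.sum_sum_type]
    rfl
  have hx2 : ‖x‖ ^ 2 = ‖x₁‖ ^ 2 + ‖x₂‖ ^ 2 := by
    rw [euclid_norm_sq, euclid_norm_sq, euclid_norm_sq, Fintype.sum_sum_type]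
    rfl
  rw [hsplit, mul_pow, hx2, mul_add]
  have b1 := Matrix.l2_opNorm_mulVec X x₁
  have b2 := Matrix.l2_opNorm_mulVec Y x₂
  have c1 : ‖(EuclideanSpace.equiv p ℝ).symm (X *ᵥ (x₁ : p → ℝ))‖ ^ 2 ≤ c ^ 2 * ‖x₁‖ ^ 2 := by
    have hb : ‖(EuclideanSpace.equiv p ℝ).symm (X *ᵥ (x₁ : p → ℝ))‖ ≤ c * ‖x₁‖ :=
      b1.trans (by nlinarith [norm_nonneg x₁, norm_nonneg X])
    nlinarith [norm_nonneg ((EuclideanSpace.equiv p ℝ).symm (X *ᵥ (x₁ : p → ℝ))), norm_nonneg x₁]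
  have c2 : ‖(EuclideanSpace.equiv q ℝ).symm (Y *ᵥ (x₂ : q → ℝ))‖ ^ 2 ≤ c ^ 2 * ‖x₂‖ ^ 2 := by
    have hb : ‖(EuclideanSpace.equiv q ℝ).symm (Y *ᵥ (x₂ : q → ℝ))‖ ≤ c * ‖x₂‖ :=
      b2.trans (by nlinarith [norm_nonneg x₂, norm_nonneg Y])
    nlinarith [norm_nonneg ((EuclideanSpace.equiv q ℝ).symm (Y *ᵥ (x₂ : q → ℝ))), norm_nonneg x₂]
  linarith

private lemma key_bound {ρ r : ℕ}
    (S : Matrix (Fin ρ ⊕ Fin r) (Fin ρ ⊕ Fin r) ℝ) (hS' : S * Sᵀ = 1)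
    (U : Matrix (Fin ρ ⊕ Fin r) (Fin r) ℝ)
    (Ub : Matrix (Fin ρ) (Fin r) ℝ) (Ur : Matrix (Fin r) (Fin r) ℝ)
    (hU : Sᵀ * U = Matrix.fromRows Ub Ur) (hUr : IsUnit Ur)
    (RU : Matrix (Fin ρ ⊕ Fin r) (Fin ρ ⊕ Fin r) ℝ) (hRU : RU = Matrix.fromBlocks 1 Ub 0 Ur) :
    RU⁻¹ = Matrix.fromBlocks 1 (-(Ub * Ur⁻¹)) 0 Ur⁻¹ ∧
    ‖RU⁻¹‖ ≤ (1 + ‖U‖) * max 1 ‖Ur⁻¹‖ := by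
  have hUrdet : IsUnit Ur.det := (Matrix.isUnit_iff_isUnit_det Ur).mp hUr
  have hUrinv : Ur * Ur⁻¹ = 1 := Matrix.mul_nonsing_inv Ur hUrdet
  have hinv : RU⁻¹ = Matrix.fromBlocks 1 (-(Ub * Ur⁻¹)) 0 Ur⁻¹ := by
    apply Matrix.inv_eq_right_inv
    rw [hRU, Matrix.fromBlocks_multiply, ← Matrix.fromBlocks_one]
    congr 1 <;> simp [hUrinv]
  refine ⟨hinv, ?_⟩
  -- norms of the embeddings
  have hrows : ‖(Matrix.fromRows (1 : Matrix (Fin ρ) (Fin ρ) ℝ) (0 : Matrix (Fin r) (Fin ρ) ℝ))‖ ≤ 1 := by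
    apply l2norm_le_one_of_mul
    rw [Matrix.transpose_fromRows, Matrix.fromCols_mul_fromRows]
    simp
  have hrows2 : ‖(Matrix.fromRows (0 : Matrix (Fin ρ) (Fin r) ℝ) (1 : Matrix (Fin r) (Fin r) ℝ))‖ ≤ 1 := by
    apply l2norm_le_one_of_mul
    rw [Matrix.transpose_fromRows, Matrix.fromCols_mul_fromRows]
    simp
  have hcols : ‖(Matrix.fromCols (1 : Matrix (Fin ρ) (Fin ρ) ℝ) (0 : Matrix (Fin ρ) (Fin r) ℝ))‖ ≤ 1 := by
    have := l2norm_transpose (Matrix.fromRows (1 : Matrix (Fin ρ) (Fin ρ) ℝ) (0 : Matrix (Fin r) (Fin ρ) ℝ))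
    rw [Matrix.transpose_fromRows] at this
    simpa using this.le.trans hrows
  have hcols2 : ‖(Matrix.fromCols (0 : Matrix (Fin r) (Fin ρ) ℝ) (1 : Matrix (Fin r) (Fin r) ℝ))‖ ≤ 1 := by
    have := l2norm_transpose (Matrix.fromRows (0 : Matrix (Fin ρ) (Fin r) ℝ) (1 : Matrix (Fin r) (Fin r) ℝ))
    rw [Matrix.transpose_fromRows] at this
    simpa using this.le.trans hrows2
  have hST : ‖Sᵀ‖ ≤ 1 := by
    apply l2norm_le_one_of_mul
    rw [Matrix.transpose_transpose]
    exact hS'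
  have hUb : ‖Ub‖ ≤ ‖U‖ := by
    have hUbeq : Ub = Matrix.fromCols (1 : Matrix (Fin ρ) (Fin ρ) ℝ) (0 : Matrix (Fin ρ) (Fin r) ℝ) * (Sᵀ * U) := by
      rw [hU, Matrix.fromCols_mul_fromRows]; simp
    calc ‖Ub‖ = ‖Matrix.fromCols (1 : Matrix (Fin ρ) (Fin ρ) ℝ) (0 : Matrix (Fin ρ) (Fin r) ℝ) * (Sᵀ * U)‖ := by rw [← hUbeq]
      _ ≤ ‖Matrix.fromCols (1 : Matrix (Fin ρ) (Fin ρ) ℝ) (0 : Matrix (Fin ρ) (Fin r) ℝ)‖ * ‖Sᵀ * U‖ := Matrix.l2_opNorm_mul _ _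
      _ ≤ 1 * (‖Sᵀ‖ * ‖U‖) :=
          mul_le_mul hcols (Matrix.l2_opNorm_mul _ _) (norm_nonneg _) zero_le_one
      _ ≤ 1 * (1 * ‖U‖) := by
          have := mul_le_mul hST (le_refl ‖U‖) (norm_nonneg _) zero_le_one
          linarith
      _ = ‖U‖ := by ring
  -- the two factors
  have hfac : RU⁻¹ = Matrix.fromBlocks (1 : Matrix (Fin ρ) (Fin ρ) ℝ) (-Ub) (0 : Matrix (Fin r) (Fin ρ) ℝ) (1 : Matrix (Fin r) (Fin r) ℝ) * Matrix.fromBlocks (1 : Matrix (Fin ρ) (Fin ρ) ℝ) (0 : Matrix (Fin ρ) (Fin r) ℝ) (0 : Matrix (Fin r) (Fin ρ) ℝ) Ur⁻¹ := by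
    rw [hinv, Matrix.fromBlocks_multiply]
    congr 1 <;> simp
  have hUbblock : ‖Matrix.fromBlocks (0 : Matrix (Fin ρ) (Fin ρ) ℝ) (-Ub) (0 : Matrix (Fin r) (Fin ρ) ℝ) (0 : Matrix (Fin r) (Fin r) ℝ)‖ ≤ ‖U‖ := by
    have hfac2 : Matrix.fromBlocks (0 : Matrix (Fin ρ) (Fin ρ) ℝ) (-Ub) (0 : Matrix (Fin r) (Fin ρ) ℝ) (0 : Matrix (Fin r) (Fin r) ℝ)
        = Matrix.fromRows (1 : Matrix (Fin ρ) (Fin ρ) ℝ) 0 * (-Ub) *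
          Matrix.fromCols (0 : Matrix (Fin r) (Fin ρ) ℝ) 1 := by
      rw [Matrix.fromRows_mul, Matrix.fromRows_mul_fromCols]
      simp
    rw [hfac2]
    calc ‖Matrix.fromRows (1 : Matrix (Fin ρ) (Fin ρ) ℝ) 0 * (-Ub) * Matrix.fromCols (0 : Matrix (Fin r) (Fin ρ) ℝ) 1‖
        ≤ ‖Matrix.fromRows (1 : Matrix (Fin ρ) (Fin ρ) ℝ) 0 * (-Ub)‖ * ‖Matrix.fromCols (0 : Matrix (Fin r) (Fin ρ) ℝ) 1‖ := Matrix.l2_opNorm_mul _ _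
      _ ≤ (‖Matrix.fromRows (1 : Matrix (Fin ρ) (Fin ρ) ℝ) 0‖ * ‖(-Ub)‖) * 1 :=
          mul_le_mul (Matrix.l2_opNorm_mul _ _) hcols2 (norm_nonneg _) (by positivity)
      _ ≤ (1 * ‖Ub‖) * 1 := by
          rw [norm_neg]
          have := mul_le_mul hrows (le_refl ‖Ub‖) (norm_nonneg _) zero_le_one
          nlinarith [norm_nonneg Ub]
      _ ≤ ‖U‖ := by simpa using hUb
  have hb1 : ‖Matrix.fromBlocks (1 : Matrix (Fin ρ) (Fin ρ) ℝ) (-Ub) (0 : Matrix (Fin r) (Fin ρ) ℝ) (1 : Matrix (Fin r) (Fin r) ℝ)‖ ≤ 1 + ‖U‖ := by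
    have hsum : Matrix.fromBlocks (1 : Matrix (Fin ρ) (Fin ρ) ℝ) (-Ub) (0 : Matrix (Fin r) (Fin ρ) ℝ) (1 : Matrix (Fin r) (Fin r) ℝ)
        = (1 : Matrix (Fin ρ ⊕ Fin r) (Fin ρ ⊕ Fin r) ℝ) +
          Matrix.fromBlocks 0 (-Ub) 0 0 := by
      rw [← Matrix.fromBlocks_one, Matrix.fromBlocks_add]
      simp
    rw [hsum]
    calc ‖(1 : Matrix (Fin ρ ⊕ Fin r) (Fin ρ ⊕ Fin r) ℝ) + Matrix.fromBlocks 0 (-Ub) 0 0‖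
        ≤ ‖(1 : Matrix (Fin ρ ⊕ Fin r) (Fin ρ ⊕ Fin r) ℝ)‖ + ‖Matrix.fromBlocks (0 : Matrix (Fin ρ) (Fin ρ) ℝ) (-Ub) (0 : Matrix (Fin r) (Fin ρ) ℝ) (0 : Matrix (Fin r) (Fin r) ℝ)‖ := norm_add_le _ _
      _ ≤ 1 + ‖U‖ := add_le_add l2norm_one_le hUbblock
  have hb2 : ‖Matrix.fromBlocks (1 : Matrix (Fin ρ) (Fin ρ) ℝ) (0 : Matrix (Fin ρ) (Fin r) ℝ) (0 : Matrix (Fin r) (Fin ρ) ℝ) Ur⁻¹‖ ≤ max 1 ‖Ur⁻¹‖ :=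
    l2norm_fromBlocks_diag_le _ _ (le_trans zero_le_one (le_max_left _ _))
      (l2norm_one_le.trans (le_max_left _ _)) (le_max_right _ _)
  rw [hfac]
  calc ‖Matrix.fromBlocks (1 : Matrix (Fin ρ) (Fin ρ) ℝ) (-Ub) (0 : Matrix (Fin r) (Fin ρ) ℝ) (1 : Matrix (Fin r) (Fin r) ℝ) * Matrix.fromBlocks (1 : Matrix (Fin ρ) (Fin ρ) ℝ) (0 : Matrix (Fin ρ) (Fin r) ℝ) (0 : Matrix (Fin r) (Fin ρ) ℝ) Ur⁻¹‖
      ≤ ‖Matrix.fromBlocks (1 : Matrix (Fin ρ) (Fin ρ) ℝ) (-Ub) (0 : Matrix (Fin r) (Fin ρ) ℝ) (1 : Matrix (Fin r) (Fin r) ℝ)‖ * ‖Matrix.fromBlocks (1 : Matrix (Fin ρ) (Fin ρ) ℝ) (0 : Matrix (Fin ρ) (Fin r) ℝ) (0 : Matrix (Fin r) (Fin ρ) ℝ) Ur⁻¹‖ := Matrix.l2_opNorm_mul _ _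
    _ ≤ (1 + ‖U‖) * max 1 ‖Ur⁻¹‖ :=
        mul_le_mul hb1 hb2 (norm_nonneg _) (by positivity)

theorem stmt15 {ρ r : ℕ} (hρ : 0 < ρ)
    (σ : Fin ρ → ℝ) (hσ : ∀ j, 0 < σ j)
    (hmono : ∀ i j : Fin ρ, i ≤ j → σ j ≤ σ i)
    (S T : Matrix (Fin ρ ⊕ Fin r) (Fin ρ ⊕ Fin r) ℝ)
    (hS : Sᵀ * S = 1) (hS' : S * Sᵀ = 1) (hT : Tᵀ * T = 1) (hT' : T * Tᵀ = 1)
    (A Sig : Matrix (Fin ρ ⊕ Fin r) (Fin ρ ⊕ Fin r) ℝ)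
    (hSig : Sig = Matrix.fromBlocks (Matrix.diagonal σ) 0 0 0)
    (hA : A = S * Sig * Tᵀ) (hA1 : ‖A‖ = 1)
    (U V : Matrix (Fin ρ ⊕ Fin r) (Fin r) ℝ)
    (Ub : Matrix (Fin ρ) (Fin r) ℝ) (Ur : Matrix (Fin r) (Fin r) ℝ)
    (Vb : Matrix (Fin ρ) (Fin r) ℝ) (Vr : Matrix (Fin r) (Fin r) ℝ)
    (hU : Sᵀ * U = Matrix.fromRows Ub Ur) (hV : Tᵀ * V = Matrix.fromRows Vb Vr)
    (hUr : IsUnit Ur) (hVr : IsUnit Vr)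
    (RU RV : Matrix (Fin ρ ⊕ Fin r) (Fin ρ ⊕ Fin r) ℝ)
    (hRU : RU = Matrix.fromBlocks 1 Ub 0 Ur) (hRV : RV = Matrix.fromBlocks 1 Vb 0 Vr)
    (C : Matrix (Fin ρ ⊕ Fin r) (Fin ρ ⊕ Fin r) ℝ)
    (hC : C = A + U * Vᵀ) :
    IsUnit C ∧
    σ ⟨ρ - 1, by omega⟩ / ‖C⁻¹‖⁻¹ ≤ ‖RU⁻¹‖ * ‖RV⁻¹‖ ∧
    ‖RU⁻¹‖ * ‖RV⁻¹‖ ≤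
      (1 + ‖U‖) * (1 + ‖V‖) * max 1 ‖Ur⁻¹‖ * max 1 ‖Vr⁻¹‖ := by
  obtain ⟨hRUinv, hRUbound⟩ := key_bound S hS' U Ub Ur hU hUr RU hRU
  obtain ⟨hRVinv, hRVbound⟩ := key_bound T hT' V Vb Vr hV hVr RV hRV
  set σl : ℝ := σ ⟨ρ - 1, by omega⟩ with hσl
  have hσlpos : 0 < σl := hσ _
  -- the diagonal middle factor
  set d : (Fin ρ ⊕ Fin r) → ℝ := Sum.elim σ (fun _ => 1) with hd
  set D : Matrix (Fin ρ ⊕ Fin r) (Fin ρ ⊕ Fin r) ℝ := Matrix.diagonal d with hD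
  have hDblocks : D = Matrix.fromBlocks (Matrix.diagonal σ) 0 0 (1 : Matrix (Fin r) (Fin r) ℝ) := by
    rw [hD, hd, ← Matrix.fromBlocks_diagonal, Matrix.diagonal_one]
  -- σ j ≤ 1
  have hSigdiag : Sig = Matrix.diagonal (Sum.elim σ (fun _ : Fin r => (0 : ℝ))) := by
    rw [hSig, ← Matrix.fromBlocks_diagonal, Matrix.diagonal_zero]
  have hSTn : ‖Sᵀ‖ ≤ 1 := l2norm_le_one_of_mul Sᵀ (by rw [Matrix.transpose_transpose]; exact hS')
  have hTn : ‖T‖ ≤ 1 := l2norm_le_one_of_mul T hT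
  have hSigeq : Sig = Sᵀ * A * T := by
    rw [hA]
    simp only [← Matrix.mul_assoc]
    rw [hS, Matrix.one_mul, Matrix.mul_assoc, hT, Matrix.mul_one]
  have hSign : ‖Sig‖ ≤ 1 := by
    rw [hSigeq]
    calc ‖Sᵀ * A * T‖ ≤ ‖Sᵀ * A‖ * ‖T‖ := Matrix.l2_opNorm_mul _ _
      _ ≤ (‖Sᵀ‖ * ‖A‖) * 1 := mul_le_mul (Matrix.l2_opNorm_mul _ _) hTn (norm_nonneg _) (by positivity)
      _ ≤ (1 * 1) * 1 := by
          rw [hA1]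
          have : ‖Sᵀ‖ * 1 ≤ 1 * 1 := by nlinarith [norm_nonneg Sᵀ]
          linarith
      _ = 1 := by ring
  have hσle1 : ∀ j : Fin ρ, σ j ≤ 1 := by
    intro j
    have h1 := le_l2norm_diagonal (Sum.elim σ (fun _ : Fin r => (0 : ℝ))) (Sum.inl j)
    rw [← hSigdiag] at h1
    have := le_abs_self (σ j)
    simp only [Sum.elim_inl] at h1
    linarith
  have hσl1 : σl ≤ 1 := hσle1 _
  -- invertibility pieces
  have hUrdet : IsUnit Ur.det := (Matrix.isUnit_iff_isUnit_det Ur).mp hUr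
  have hVrdet : IsUnit Vr.det := (Matrix.isUnit_iff_isUnit_det Vr).mp hVr
  have hdne : ∀ i, d i ≠ 0 := by
    intro i; cases i with
    | inl j => exact ne_of_gt (hσ j)
    | inr j => simp [hd]
  have uD : IsUnit D := by
    rw [Matrix.isUnit_iff_isUnit_det, hD, Matrix.det_diagonal, isUnit_iff_ne_zero]
    exact Finset.prod_ne_zero_iff.mpr fun i _ => hdne i
  have uRU : IsUnit RU := by
    rw [Matrix.isUnit_iff_isUnit_det, hRU, Matrix.det_fromBlocks_zero₂₁, Matrix.det_one, one_mul]
    exact hUrdet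
  have uRV : IsUnit RV := by
    rw [Matrix.isUnit_iff_isUnit_det, hRV, Matrix.det_fromBlocks_zero₂₁, Matrix.det_one, one_mul]
    exact hVrdet
  have uRVT : IsUnit RVᵀ := by
    rw [Matrix.isUnit_iff_isUnit_det, Matrix.det_transpose]
    exact (Matrix.isUnit_iff_isUnit_det RV).mp uRV
  have uS : IsUnit S := ⟨⟨S, Sᵀ, hS', hS⟩, rfl⟩
  have uTT : IsUnit Tᵀ := ⟨⟨Tᵀ, T, hT, hT'⟩, rfl⟩
  -- factorization
  have hUeq : U = S * Matrix.fromRows Ub Ur := by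
    rw [← hU, ← Matrix.mul_assoc, hS', Matrix.one_mul]
  have hVeq : V = T * Matrix.fromRows Vb Vr := by
    rw [← hV, ← Matrix.mul_assoc, hT', Matrix.one_mul]
  have hmid : RU * D * RVᵀ = Sig + Matrix.fromRows Ub Ur * (Matrix.fromRows Vb Vr)ᵀ := by
    rw [hRU, hRV, hDblocks, hSig, Matrix.fromBlocks_transpose, Matrix.transpose_fromRows,
      Matrix.fromRows_mul_fromCols, Matrix.fromBlocks_multiply, Matrix.fromBlocks_multiply,
      Matrix.fromBlocks_add]
    congr 1 <;> simp
  have hCfact : C = S * (RU * D * RVᵀ) * Tᵀ := by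
    rw [hC, hmid, hA, hUeq, hVeq, Matrix.transpose_mul, Matrix.mul_add]
    rw [Matrix.add_mul]
    congr 1
    simp only [Matrix.mul_assoc]
  have uC : IsUnit C := by
    rw [hCfact]
    exact ((uS.mul ((uRU.mul uD).mul uRVT)).mul uTT)
  refine ⟨uC, ?_, ?_⟩
  · -- second goal
    have hRUr : RU * RU⁻¹ = 1 := Matrix.mul_nonsing_inv RU ((Matrix.isUnit_iff_isUnit_det RU).mp uRU)
    have hRVTr : RVᵀ * (RVᵀ)⁻¹ = 1 := Matrix.mul_nonsing_inv RVᵀ ((Matrix.isUnit_iff_isUnit_det RVᵀ).mp uRVT)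
    have hDr : D * D⁻¹ = 1 := Matrix.mul_nonsing_inv D ((Matrix.isUnit_iff_isUnit_det D).mp uD)
    have hCinv : C⁻¹ = T * ((RVᵀ)⁻¹ * (D⁻¹ * (RU⁻¹ * Sᵀ))) := by
      apply Matrix.inv_eq_right_inv
      rw [hCfact]
      have cT : ∀ X : Matrix (Fin ρ ⊕ Fin r) (Fin ρ ⊕ Fin r) ℝ, Tᵀ * (T * X) = X := fun X => by
        rw [← Matrix.mul_assoc, hT, Matrix.one_mul]
      have cRV : ∀ X : Matrix (Fin ρ ⊕ Fin r) (Fin ρ ⊕ Fin r) ℝ, RVᵀ * ((RVᵀ)⁻¹ * X) = X := fun X => by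
        rw [← Matrix.mul_assoc, hRVTr, Matrix.one_mul]
      have cD : ∀ X : Matrix (Fin ρ ⊕ Fin r) (Fin ρ ⊕ Fin r) ℝ, D * (D⁻¹ * X) = X := fun X => by
        rw [← Matrix.mul_assoc, hDr, Matrix.one_mul]
      have cRU : ∀ X : Matrix (Fin ρ ⊕ Fin r) (Fin ρ ⊕ Fin r) ℝ, RU * (RU⁻¹ * X) = X := fun X => by
        rw [← Matrix.mul_assoc, hRUr, Matrix.one_mul]
      simp only [Matrix.mul_assoc]
      rw [cT, cRV, cD, cRU, hS']
    -- bound ‖D⁻¹‖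
    have hDinv : D⁻¹ = Matrix.diagonal (fun i => (d i)⁻¹) := by
      apply Matrix.inv_eq_right_inv
      rw [hD, Matrix.diagonal_mul_diagonal]
      have hfun : (fun i => d i * (d i)⁻¹) = fun _ => (1 : ℝ) :=
        funext fun i => mul_inv_cancel₀ (hdne i)
      rw [hfun, Matrix.diagonal_one]
    have hDinvn : ‖D⁻¹‖ ≤ σl⁻¹ := by
      rw [hDinv]
      apply l2norm_diagonal_le _ (inv_nonneg.mpr hσlpos.le)
      intro i
      cases i with
      | inl j =>
        have h1 : σl ≤ σ j := by
          apply hmono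
          have := j.isLt
          exact Fin.mk_le_mk.mpr (by omega) |>.trans_eq rfl
        simp only [Sum.elim_inl, hd]
        rw [abs_of_nonneg (inv_nonneg.mpr (hσ j).le)]
        exact inv_anti₀ hσlpos h1
      | inr j =>
        simp only [Sum.elim_inr, hd]
        rw [abs_of_nonneg (by norm_num)]
        have h2 : σl * σl⁻¹ = 1 := mul_inv_cancel₀ (ne_of_gt hσlpos)
        nlinarith [inv_nonneg.mpr (le_of_lt hσlpos)]
    have hRVTinv : ‖(RVᵀ)⁻¹‖ = ‖RV⁻¹‖ := by
      rw [← Matrix.transpose_nonsing_inv]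
      exact l2norm_transpose RV⁻¹
    have hCn : ‖C⁻¹‖ ≤ ‖RV⁻¹‖ * (σl⁻¹ * ‖RU⁻¹‖) := by
      rw [hCinv]
      have n1 : ‖RU⁻¹ * Sᵀ‖ ≤ ‖RU⁻¹‖ := by
        calc ‖RU⁻¹ * Sᵀ‖ ≤ ‖RU⁻¹‖ * ‖Sᵀ‖ := Matrix.l2_opNorm_mul _ _
          _ ≤ ‖RU⁻¹‖ := mul_le_of_le_one_right (norm_nonneg _) hSTn
      have n2 : ‖D⁻¹ * (RU⁻¹ * Sᵀ)‖ ≤ σl⁻¹ * ‖RU⁻¹‖ := by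
        calc ‖D⁻¹ * (RU⁻¹ * Sᵀ)‖ ≤ ‖D⁻¹‖ * ‖RU⁻¹ * Sᵀ‖ := Matrix.l2_opNorm_mul _ _
          _ ≤ σl⁻¹ * ‖RU⁻¹‖ := mul_le_mul hDinvn n1 (norm_nonneg _) (inv_nonneg.mpr hσlpos.le)
      have n3 : ‖(RVᵀ)⁻¹ * (D⁻¹ * (RU⁻¹ * Sᵀ))‖ ≤ ‖RV⁻¹‖ * (σl⁻¹ * ‖RU⁻¹‖) := by
        calc ‖(RVᵀ)⁻¹ * (D⁻¹ * (RU⁻¹ * Sᵀ))‖ ≤ ‖(RVᵀ)⁻¹‖ * ‖D⁻¹ * (RU⁻¹ * Sᵀ)‖ :=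
              Matrix.l2_opNorm_mul _ _
          _ ≤ ‖RV⁻¹‖ * (σl⁻¹ * ‖RU⁻¹‖) := by
              rw [hRVTinv]
              exact mul_le_mul_of_nonneg_left n2 (norm_nonneg _)
      calc ‖T * ((RVᵀ)⁻¹ * (D⁻¹ * (RU⁻¹ * Sᵀ)))‖ ≤ ‖T‖ * ‖(RVᵀ)⁻¹ * (D⁻¹ * (RU⁻¹ * Sᵀ))‖ :=
            Matrix.l2_opNorm_mul _ _
        _ ≤ ‖RV⁻¹‖ * (σl⁻¹ * ‖RU⁻¹‖) := by
            have := mul_le_mul hTn n3 (norm_nonneg _) zero_le_one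
            calc ‖T‖ * ‖(RVᵀ)⁻¹ * (D⁻¹ * (RU⁻¹ * Sᵀ))‖ ≤ 1 * (‖RV⁻¹‖ * (σl⁻¹ * ‖RU⁻¹‖)) := this
              _ = _ := one_mul _
    rw [div_inv_eq_mul]
    calc σl * ‖C⁻¹‖ ≤ σl * (‖RV⁻¹‖ * (σl⁻¹ * ‖RU⁻¹‖)) :=
          mul_le_mul_of_nonneg_left hCn (le_of_lt hσlpos)
      _ = (σl * σl⁻¹) * (‖RU⁻¹‖ * ‖RV⁻¹‖) := by ring
      _ = ‖RU⁻¹‖ * ‖RV⁻¹‖ := by rw [mul_inv_cancel₀ (ne_of_gt hσlpos), one_mul]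
  · -- third goal
    calc ‖RU⁻¹‖ * ‖RV⁻¹‖
        ≤ ((1 + ‖U‖) * max 1 ‖Ur⁻¹‖) * ((1 + ‖V‖) * max 1 ‖Vr⁻¹‖) :=
          mul_le_mul hRUbound hRVbound (norm_nonneg _) (by positivity)
      _ = (1 + ‖U‖) * (1 + ‖V‖) * max 1 ‖Ur⁻¹‖ * max 1 ‖Vr⁻¹‖ := by ring
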